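/- Let R be a commutative ring, p(t) ∈ R[t] with p(0) = 1 and degree d with unit leading coefficient, and N an R-module. For each m ∈ ℤ, the sequence of R-modules 0 → ⊕_{n∈ℤ} N → ⊕_{n∈ℤ} N → N^{⊕ d} → 0 is exact, where the first map acts by the column-finite matrix M_{ij} = (−1)^j(−1)^{(i−j)} β_{i−j} formed from the coefficients p(t) = Σ (−1)^i β_i t^i, and the second map is the composite of the identification ⊕_{n∈ℤ} N ≅ R[t,t⁻¹] ⊗_R N, reduction modulo p(t), and the basis identification (R[t]/⟨p(t)⟩) ⊗_R N ≅ N^{⊕ d}. -/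

import Mathlib

open Polynomial TensorProduct

/-- The column-finite matrix `M_{ij} = (-1)^j (-1)^{i-j} β_{i-j}` acting on `⊕_{n∈ℤ} N`. -/
noncomputable def matrixMap (R : Type*) [CommRing R] (d : ℕ) (β : ℕ → R)
    (N : Type*) [AddCommGroup N] [Module R N] : (ℤ →₀ N) →ₗ[R] (ℤ →₀ N) :=
  Finsupp.lsum R fun j : ℤ =>
    ∑ r ∈ Finset.range (d + 1),
      ((((-1 : Rˣ) ^ j : Rˣ) : R) * ((-1 : R) ^ r * β r)) •
        (Finsupp.lsingle (j + r) : N →ₗ[R] (ℤ →₀ N))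

/-- The identification `⊕_{n∈ℤ} N ≅ R[t,t⁻¹] ⊗_R N`, position `j ↦ t^j ⊗ -`. -/
noncomputable def laurentIdent (R : Type*) [CommRing R]
    (N : Type*) [AddCommGroup N] [Module R N] :
    (ℤ →₀ N) →ₗ[R] (LaurentPolynomial R ⊗[R] N) :=
  Finsupp.lsum R fun j : ℤ =>
    TensorProduct.mk R (LaurentPolynomial R) N (LaurentPolynomial.T j)

/-- Since `p(0) = 1`, the class of `t` is a unit in `R[t]/⟨p⟩`. -/
noncomputable def tUnit (R : Type*) [CommRing R] (p : Polynomial R) (hp : p.coeff 0 = 1) :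
    (Polynomial R ⧸ Ideal.span {p})ˣ :=
  Units.mkOfMulEqOne (Ideal.Quotient.mk (Ideal.span {p}) X)
    (Ideal.Quotient.mk (Ideal.span {p}) (-p.divX)) (by
      rw [← map_mul, ← map_one (Ideal.Quotient.mk (Ideal.span {p})),
        Ideal.Quotient.mk_eq_mk_iff_sub_mem]
      have h : p.divX * X + C (p.coeff 0) = p := p.divX_mul_X_add
      rw [hp, map_one] at h
      have h2 : X * -p.divX - 1 = -p := by linear_combination -h
      rw [h2]
      exact neg_mem (Ideal.subset_span (Set.mem_singleton p)))

/-- Reduction modulo `p` from Laurent polynomials, `t ↦` the unit class of `t`. -/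
noncomputable def laurentToQuot (R : Type*) [CommRing R] (p : Polynomial R)
    (hp : p.coeff 0 = 1) :
    LaurentPolynomial R →ₐ[R] (Polynomial R ⧸ Ideal.span {p}) :=
  AddMonoidAlgebra.lift R (Polynomial R ⧸ Ideal.span {p}) ℤ
    ((Units.coeHom _).comp (zpowersHom _ (tUnit R p hp)))

/-- The identification `(R[t]/⟨p⟩) ⊗_R N ≅ N^{⊕d}` coming from the basis `1, t, …, t^{d-1}`
(as a map `N^{⊕d} → (R[t]/⟨p⟩) ⊗_R N`). -/
noncomputable def basisMap (R : Type*) [CommRing R] (p : Polynomial R) (d : ℕ)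
    (N : Type*) [AddCommGroup N] [Module R N] :
    (Fin d → N) →ₗ[R] ((Polynomial R ⧸ Ideal.span {p}) ⊗[R] N) :=
  ∑ n : Fin d,
    (TensorProduct.mk R (Polynomial R ⧸ Ideal.span {p}) N
        (Ideal.Quotient.mk (Ideal.span {p}) (X ^ (n : ℕ)))).comp
      (LinearMap.proj n : (Fin d → N) →ₗ[R] N)


open LaurentPolynomial (T)

section Aux

variable (R : Type*) [CommRing R] (N : Type*) [AddCommGroup N] [Module R N]

/-- inverse of laurentIdent -/
noncomputable def laurentInv :
    (LaurentPolynomial R ⊗[R] N) →ₗ[R] (ℤ →₀ N) :=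
  TensorProduct.lift
    ((Finsupp.lsum R fun j : ℤ =>
      LinearMap.toSpanSingleton R (N →ₗ[R] (ℤ →₀ N)) (Finsupp.lsingle j) :
        (ℤ →₀ R) →ₗ[R] (N →ₗ[R] (ℤ →₀ N))) ∘ₗ
      (AddMonoidAlgebra.coeffLinearEquiv R).toLinearMap)

lemma laurentIdent_single (j : ℤ) (x : N) :
    laurentIdent R N (Finsupp.single j x) = LaurentPolynomial.T j ⊗ₜ[R] x := by
  simp [laurentIdent]

lemma laurentInv_single_tmul (j : ℤ) (a : R) (x : N) :
    laurentInv R N ((AddMonoidAlgebra.single j a : LaurentPolynomial R) ⊗ₜ[R] x)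
      = Finsupp.single j (a • x) := by
  rw [laurentInv, TensorProduct.lift.tmul, LinearMap.comp_apply]
  erw [Finsupp.lsum_single]
  rw [LinearMap.toSpanSingleton_apply]
  simp [Finsupp.smul_single]

lemma laurentInv_T_tmul (j : ℤ) (x : N) :
    laurentInv R N (LaurentPolynomial.T j ⊗ₜ[R] x) = Finsupp.single j x := by
  have : (LaurentPolynomial.T j : LaurentPolynomial R) = AddMonoidAlgebra.single j (1 : R) := rfl
  rw [this, laurentInv_single_tmul, one_smul]

noncomputable def laurentEquiv : (ℤ →₀ N) ≃ₗ[R] (LaurentPolynomial R ⊗[R] N) :=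
  LinearEquiv.ofLinear (laurentIdent R N) (laurentInv R N)
    (by
      ext l x
      change (laurentIdent R N) ((laurentInv R N)
        ((AddMonoidAlgebra.single l (1:R) : LaurentPolynomial R) ⊗ₜ[R] x)) =
        (AddMonoidAlgebra.single l (1:R) : LaurentPolynomial R) ⊗ₜ[R] x
      rw [laurentInv_single_tmul, one_smul, laurentIdent_single]
      rfl)
    (by
      ext j x
      simp only [LinearMap.comp_apply, Finsupp.lsingle_apply, LinearMap.id_coe, id_eq]
      rw [laurentIdent_single, laurentInv_T_tmul])

lemma laurentEquiv_coe : (laurentEquiv R N : (ℤ →₀ N) →ₗ[R] _) = laurentIdent R N := rfl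

noncomputable def sigmaLin : LaurentPolynomial R →ₗ[R] LaurentPolynomial R :=
  (AddMonoidAlgebra.coeffLinearEquiv R).symm.toLinearMap ∘ₗ (Finsupp.lsum R fun j : ℤ =>
    (((-1 : Rˣ) ^ j : Rˣ) : R) • (Finsupp.lsingle j : R →ₗ[R] (ℤ →₀ R))) ∘ₗ
      (AddMonoidAlgebra.coeffLinearEquiv R).toLinearMap

lemma sgn_mul_sgn (j : ℤ) : ((((-1 : Rˣ) ^ j : Rˣ) : R)) * ((((-1 : Rˣ) ^ j : Rˣ) : R)) = 1 := by
  have : ((-1 : Rˣ) ^ j) * ((-1 : Rˣ) ^ j) = 1 := by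
    rw [← mul_zpow]; norm_num
  rw [← Units.val_mul, this, Units.val_one]

lemma sigmaLin_single (j : ℤ) (a : R) :
    sigmaLin R (AddMonoidAlgebra.single j a) =
      ((((-1 : Rˣ) ^ j : Rˣ) : R)) • (AddMonoidAlgebra.single j a : LaurentPolynomial R) := by
  rw [sigmaLin]
  simp only [LinearMap.comp_apply, LinearEquiv.coe_coe, AddMonoidAlgebra.coeffLinearEquiv_apply,
    AddMonoidAlgebra.coeff_single, Finsupp.lsum_single, LinearMap.smul_apply, Finsupp.lsingle_apply,
    Finsupp.smul_single, AddMonoidAlgebra.coeffLinearEquiv_symm_apply, AddMonoidAlgebra.smul_single,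
    AddMonoidAlgebra.ofCoeff_single]

lemma sigmaLin_sigmaLin : (sigmaLin R) ∘ₗ (sigmaLin R) = LinearMap.id := by
  refine AddMonoidAlgebra.lhom_ext' fun j => LinearMap.ext fun a => ?_
  change sigmaLin R (sigmaLin R (AddMonoidAlgebra.single j a)) = AddMonoidAlgebra.single j a
  rw [sigmaLin_single, map_smul, sigmaLin_single, smul_smul, sgn_mul_sgn, one_smul]

lemma sigmaLin_bijective : Function.Bijective (sigmaLin R) :=
  Function.bijective_iff_has_inverse.2 ⟨sigmaLin R,
    fun x => by rw [← LinearMap.comp_apply, sigmaLin_sigmaLin]; rfl,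
    fun x => by rw [← LinearMap.comp_apply, sigmaLin_sigmaLin]; rfl⟩

lemma sigmaLin_T (j : ℤ) :
    sigmaLin R (LaurentPolynomial.T j) =
      ((((-1 : Rˣ) ^ j : Rˣ) : R)) • (LaurentPolynomial.T j : LaurentPolynomial R) :=
  sigmaLin_single R j 1

lemma square (d : ℕ) (β : ℕ → R) (p : Polynomial R)
    (hp : p = ∑ i ∈ Finset.range (d + 1), Polynomial.C ((-1 : R) ^ i * β i) * X ^ i) :
    (laurentIdent R N) ∘ₗ (matrixMap R d β N) =
      (LinearMap.rTensor N ((LinearMap.mulLeft R (Polynomial.toLaurent p)) ∘ₗ sigmaLin R)) ∘ₗ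
        laurentIdent R N := by
  refine Finsupp.lhom_ext fun j x => ?_
  change laurentIdent R N (matrixMap R d β N (Finsupp.single j x)) =
    LinearMap.rTensor N _ (laurentIdent R N (Finsupp.single j x))
  have hid : ∀ (x : N) (j : ℤ), laurentIdent R N (Finsupp.single j x)
      = LaurentPolynomial.T j ⊗ₜ[R] x := by
    intro x j; simp [laurentIdent]
  rw [matrixMap]
  erw [Finsupp.lsum_single]
  rw [hid, LinearMap.rTensor_tmul, LinearMap.comp_apply, sigmaLin_T, LinearMap.sum_apply,
    map_sum, hp, LinearMap.mulLeft_apply, map_sum]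
  simp only [Polynomial.toLaurent_C_mul_X_pow]
  rw [Finset.sum_mul, TensorProduct.sum_tmul]
  refine Finset.sum_congr rfl fun r _ => ?_
  rw [LinearMap.smul_apply, Finsupp.lsingle_apply, map_smul, hid, smul_tmul']
  congr 1
  rw [mul_assoc, mul_smul_comm, ← LaurentPolynomial.T_add, mul_smul_comm,
    ← LaurentPolynomial.single_eq_C_mul_T]
  show _ • (AddMonoidAlgebra.single (j + (r:ℤ)) (1:R)) = _
  rw [AddMonoidAlgebra.smul_single, AddMonoidAlgebra.smul_single, smul_eq_mul, smul_eq_mul, mul_one, add_comm]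

end Aux

section Quot

variable (R : Type*) [CommRing R] (p : Polynomial R) (hp0 : p.coeff 0 = 1)

lemma laurentToQuot_T (j : ℤ) :
    laurentToQuot R p hp0 (T j) = ((tUnit R p hp0 ^ j :
      (Polynomial R ⧸ Ideal.span {p})ˣ) : (Polynomial R ⧸ Ideal.span {p})) := by
  have : (T j : LaurentPolynomial R) = AddMonoidAlgebra.single j 1 := rfl
  rw [laurentToQuot, this]
  erw [AddMonoidAlgebra.lift_single]
  simp

lemma laurentToQuot_toLaurent (f : Polynomial R) :
    laurentToQuot R p hp0 (Polynomial.toLaurent f) = Ideal.Quotient.mk (Ideal.span {p}) f := by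
  have : (laurentToQuot R p hp0).comp Polynomial.toLaurentAlg =
      Ideal.Quotient.mkₐ R (Ideal.span {p}) := by
    apply Polynomial.algHom_ext
    show laurentToQuot R p hp0 (Polynomial.toLaurent X) = _
    rw [Polynomial.toLaurent_X, laurentToQuot_T, zpow_one]
    rfl
  exact DFunLike.congr_fun this f

lemma laurentToQuot_surjective : Function.Surjective (laurentToQuot R p hp0) := by
  intro y
  obtain ⟨f, rfl⟩ := Ideal.Quotient.mk_surjective y
  exact ⟨Polynomial.toLaurent f, laurentToQuot_toLaurent R p hp0 f⟩

lemma ker_laurentToQuot :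
    LinearMap.ker (laurentToQuot R p hp0).toLinearMap =
      LinearMap.range (LinearMap.mulLeft R (Polynomial.toLaurent p)) := by
  ext x
  simp only [LinearMap.mem_ker, LinearMap.mem_range, AlgHom.toLinearMap_apply,
    LinearMap.mulLeft_apply]
  constructor
  · intro hx
    obtain ⟨n, f', htl⟩ := x.exists_T_pow
    have hx' : x = Polynomial.toLaurent f' * T (-(n:ℤ)) := by
      rw [htl, mul_assoc, ← LaurentPolynomial.T_add]
      simp
    have h0 : Ideal.Quotient.mk (Ideal.span {p}) f' = 0 := by
      rw [← laurentToQuot_toLaurent R p hp0, htl, map_mul, hx, zero_mul]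
    rw [Ideal.Quotient.eq_zero_iff_mem, Ideal.mem_span_singleton'] at h0
    obtain ⟨c, hc⟩ := h0
    refine ⟨Polynomial.toLaurent c * T (-(n:ℤ)), ?_⟩
    rw [hx', ← hc, map_mul, mul_comm (Polynomial.toLaurent c) (Polynomial.toLaurent p),
      mul_assoc]
  · rintro ⟨y, rfl⟩
    rw [map_mul, laurentToQuot_toLaurent]
    have : Ideal.Quotient.mk (Ideal.span {p}) p = 0 := by
      rw [Ideal.Quotient.eq_zero_iff_mem]
      exact Ideal.subset_span (Set.mem_singleton p)
    rw [this, zero_mul]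

lemma mulLeft_toLaurent_injective (hlead : IsUnit p.leadingCoeff) :
    Function.Injective (LinearMap.mulLeft R (Polynomial.toLaurent p)) := by
  intro a b hab
  simp only [LinearMap.mulLeft_apply] at hab
  have h0 : Polynomial.toLaurent p * (a - b) = 0 := by
    rw [mul_sub, hab, sub_self]
  obtain ⟨n, f', htl⟩ := (a - b).exists_T_pow
  have h1 : Polynomial.toLaurent (p * f') = 0 := by
    rw [map_mul, htl, ← mul_assoc, h0, zero_mul]
  rw [Polynomial.toLaurent_eq_zero] at h1
  have h2 : f' = 0 := ((Polynomial.isUnit_leadingCoeff_mul_right_eq_zero_iff hlead).mp h1)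
  have h3 : a - b = 0 := by
    have : a - b = Polynomial.toLaurent f' * T (-(n:ℤ)) := by
      rw [htl, mul_assoc, ← LaurentPolynomial.T_add]
      simp
    rw [this, h2, map_zero, zero_mul]
  exact sub_eq_zero.mp h3

end Quot

section BasisSec

variable (R : Type*) [CommRing R] (p : Polynomial R) (d : ℕ)

noncomputable def monicRep (hlead : IsUnit p.leadingCoeff) : Polynomial R := hlead.unit⁻¹ • p

lemma monicRep_monic (hlead : IsUnit p.leadingCoeff) : (monicRep R p hlead).Monic :=
  Polynomial.monic_of_isUnit_leadingCoeff_inv_smul hlead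

lemma monicRep_span (hlead : IsUnit p.leadingCoeff) :
    Ideal.span {monicRep R p hlead} = Ideal.span {p} := by
  apply le_antisymm
  · rw [Ideal.span_singleton_le_span_singleton]
    exact ⟨Polynomial.C ((hlead.unit⁻¹ : Rˣ) : R), by
      rw [monicRep, Units.smul_def, Polynomial.smul_eq_C_mul, mul_comm]⟩
  · rw [Ideal.span_singleton_le_span_singleton]
    exact ⟨Polynomial.C ((hlead.unit : Rˣ) : R), by
      rw [monicRep, Units.smul_def, Polynomial.smul_eq_C_mul, mul_comm, ← mul_assoc,
        ← Polynomial.C_mul]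
      simp⟩

lemma monicRep_natDegree (hlead : IsUnit p.leadingCoeff) :
    (monicRep R p hlead).natDegree = p.natDegree := by
  have h1 : (monicRep R p hlead).degree ≤ p.degree := by
    rw [monicRep, Units.smul_def]
    exact Polynomial.degree_smul_le _ _
  have h2 : p.degree ≤ (monicRep R p hlead).degree := by
    have : p = hlead.unit • monicRep R p hlead := by
      rw [monicRep, smul_smul]
      simp
    calc p.degree = (hlead.unit • monicRep R p hlead).degree := by rw [← this]
    _ ≤ _ := by rw [Units.smul_def]; exact Polynomial.degree_smul_le _ _
  exact Polynomial.natDegree_eq_natDegree (le_antisymm h1 h2)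

variable (hdeg : p.degree = d) (hlead : IsUnit p.leadingCoeff) (hd : 0 < d)

noncomputable def quotBasis :
    Module.Basis (Fin d) R (Polynomial R ⧸ Ideal.span {p}) :=
  (((AdjoinRoot.powerBasis' (monicRep_monic R p hlead)).basis.map
    (Ideal.quotientEquivAlgOfEq R (monicRep_span R p hlead)).toLinearEquiv).reindex
    (finCongr (by
      rw [AdjoinRoot.powerBasis'_dim, monicRep_natDegree]
      exact Polynomial.natDegree_eq_of_degree_eq_some hdeg)))

lemma quotBasis_apply (n : Fin d) :
    quotBasis R p d hdeg hlead n = Ideal.Quotient.mk (Ideal.span {p}) (X ^ (n : ℕ)) := by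
  have hdim : (AdjoinRoot.powerBasis' (monicRep_monic R p hlead)).dim = d := by
    rw [AdjoinRoot.powerBasis'_dim, monicRep_natDegree]
    exact Polynomial.natDegree_eq_of_degree_eq_some hdeg
  rw [quotBasis, Module.Basis.reindex_apply]
  erw [Module.Basis.map_apply]
  rw [(AdjoinRoot.powerBasis' (monicRep_monic R p hlead)).basis_eq_pow]
  have hcast : ((((finCongr hdim).symm n) : Fin _) : ℕ) = (n : ℕ) := rfl
  rw [hcast, AdjoinRoot.powerBasis'_gen]
  have hgen : (AdjoinRoot.root (monicRep R p hlead)) ^ (n : ℕ) =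
      AdjoinRoot.mk (monicRep R p hlead) (X ^ (n : ℕ)) := by
    rw [map_pow, AdjoinRoot.mk_X]
  rw [hgen]
  show (Ideal.quotientEquivAlgOfEq R (monicRep_span R p hlead))
    (Ideal.Quotient.mk _ (X ^ (n:ℕ))) = _
  rw [Ideal.quotientEquivAlgOfEq_mk]

variable (N : Type*) [AddCommGroup N] [Module R N]

noncomputable def basisEquiv :
    (Fin d → N) ≃ₗ[R] ((Polynomial R ⧸ Ideal.span {p}) ⊗[R] N) :=
  (Finsupp.linearEquivFunOnFinite R N (Fin d)).symm ≪≫ₗ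
    (TensorProduct.finsuppScalarLeft R N (Fin d)).symm ≪≫ₗ
      (LinearEquiv.rTensor N (quotBasis R p d hdeg hlead).repr.symm)

lemma basisMap_eq :
    basisMap R p d N = (basisEquiv R p d hdeg hlead N).toLinearMap := by
  refine LinearMap.pi_ext' fun n => LinearMap.ext fun x => ?_
  simp only [LinearMap.comp_apply]
  have hsingle : (LinearMap.single R (fun _ : Fin d => N) n) x = Pi.single n x := rfl
  rw [hsingle]
  have lhs : basisMap R p d N (Pi.single n x) =
      (Ideal.Quotient.mk (Ideal.span {p}) (X ^ (n : ℕ))) ⊗ₜ[R] x := by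
    rw [basisMap, LinearMap.sum_apply]
    rw [Finset.sum_eq_single n]
    · simp
    · intro m _ hm
      simp [Pi.single_eq_of_ne' hm.symm]
    · simp
  rw [lhs]
  have rhs : (basisEquiv R p d hdeg hlead N) (Pi.single n x) =
      (quotBasis R p d hdeg hlead n) ⊗ₜ[R] x := by
    rw [basisEquiv]
    simp only [LinearEquiv.trans_apply]
    have h1 : (Finsupp.linearEquivFunOnFinite R N (Fin d)).symm (Pi.single n x) =
        Finsupp.single n x := by
      rw [Finsupp.linearEquivFunOnFinite_symm_single]
    rw [h1, TensorProduct.finsuppScalarLeft_symm_apply_single]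
    show LinearEquiv.rTensor N (quotBasis R p d hdeg hlead).repr.symm
      ((Finsupp.single n (1:R)) ⊗ₜ[R] x) = _
    rw [LinearEquiv.rTensor]
    rw [TensorProduct.congr_tmul]
    rw [Module.Basis.repr_symm_single_one]
    rfl
  rw [LinearEquiv.coe_coe, rhs, quotBasis_apply]

include hdeg hlead in
lemma basisMap_bijective : Function.Bijective (basisMap R p d N) := by
  rw [basisMap_eq R p d hdeg hlead N]
  exact (basisEquiv R p d hdeg hlead N).bijective

end BasisSec

section Retract

variable (R : Type*) [CommRing R] (p : Polynomial R) (hp0 : p.coeff 0 = 1)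
  (d : ℕ) (hdeg : p.degree = d) (hlead : IsUnit p.leadingCoeff)

include hp0 hdeg hlead in
lemma exists_retraction :
    ∃ r : LaurentPolynomial R →ₗ[R] LaurentPolynomial R,
      r ∘ₗ (LinearMap.mulLeft R (Polynomial.toLaurent p)) = LinearMap.id := by
  have hproj : Module.Projective R (Polynomial R ⧸ Ideal.span {p}) :=
    Module.Projective.of_basis (quotBasis R p d hdeg hlead)
  obtain ⟨s, hs⟩ := Module.projective_lifting_property
    (laurentToQuot R p hp0).toLinearMap LinearMap.id (laurentToQuot_surjective R p hp0)
  set mulP := LinearMap.mulLeft R (Polynomial.toLaurent p) with hmulP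
  set k := LinearMap.id - s ∘ₗ (laurentToQuot R p hp0).toLinearMap with hk
  have hmem : ∀ x, k x ∈ LinearMap.range mulP := by
    intro x
    rw [← ker_laurentToQuot R p hp0, LinearMap.mem_ker]
    simp only [hk, LinearMap.sub_apply, LinearMap.id_apply, LinearMap.comp_apply, map_sub]
    have := DFunLike.congr_fun hs ((laurentToQuot R p hp0).toLinearMap x)
    simp only [LinearMap.comp_apply, LinearMap.id_apply] at this
    rw [this, sub_self]
  have hinj := mulLeft_toLaurent_injective R p hlead
  refine ⟨(LinearEquiv.ofInjective mulP hinj).symm.toLinearMap ∘ₗ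
    LinearMap.codRestrict (LinearMap.range mulP) k hmem, ?_⟩
  refine LinearMap.ext fun x => ?_
  simp only [LinearMap.comp_apply, LinearMap.id_apply, LinearEquiv.coe_coe]
  have hk0 : k (mulP x) = mulP x := by
    simp only [hk, LinearMap.sub_apply, LinearMap.id_apply, LinearMap.comp_apply]
    have : (laurentToQuot R p hp0).toLinearMap (mulP x) = 0 := by
      have : mulP x ∈ LinearMap.ker (laurentToQuot R p hp0).toLinearMap := by
        rw [ker_laurentToQuot R p hp0]
        exact ⟨x, rfl⟩
      exact this
    rw [this, map_zero, sub_zero]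
  rw [LinearEquiv.symm_apply_eq]
  apply Subtype.ext
  simp only [LinearMap.codRestrict_apply, hk0, LinearEquiv.ofInjective_apply]

end Retract

section Main

variable (R : Type*) [CommRing R] (N : Type*) [AddCommGroup N] [Module R N]

lemma rTensor_injective_of_retraction {f : LaurentPolynomial R →ₗ[R] LaurentPolynomial R}
    (r : LaurentPolynomial R →ₗ[R] LaurentPolynomial R) (hr : r ∘ₗ f = LinearMap.id) :
    Function.Injective (LinearMap.rTensor N f) := by
  have hcomp : (LinearMap.rTensor N r) ∘ₗ (LinearMap.rTensor N f) = LinearMap.id := by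
    rw [← LinearMap.rTensor_comp, hr, LinearMap.rTensor_id]
  intro a b hab
  have := congrArg (LinearMap.rTensor N r) hab
  rwa [← LinearMap.comp_apply, ← LinearMap.comp_apply, hcomp, LinearMap.id_apply,
    LinearMap.id_apply] at this

end Main

/-- For `p = Σ_{i=0}^d (-1)^i β_i t^i ∈ R[t]` with `p(0) = β₀ = 1`, degree `d` and unit
leading coefficient, and any `R`-module `N`, the sequence
`0 → ⊕_{n∈ℤ} N → ⊕_{n∈ℤ} N → N^{⊕d} → 0` is exact, where the first map is given by the
column-finite matrix `M_{ij} = (-1)^j (-1)^{i-j} β_{i-j}` and the second map is the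
composite of the identification `⊕_{n∈ℤ} N ≅ R[t,t⁻¹] ⊗_R N`, reduction modulo `p`, and
the basis identification `(R[t]/⟨p⟩) ⊗_R N ≅ N^{⊕d}`. -/
theorem stmt_18 (R : Type*) [CommRing R] (d : ℕ) (hd : 0 < d) (β : ℕ → R) (hβ0 : β 0 = 1)
    (p : Polynomial R)
    (hp : p = ∑ i ∈ Finset.range (d + 1), Polynomial.C ((-1 : R) ^ i * β i) * X ^ i)
    (hp0 : p.coeff 0 = 1) (hdeg : p.degree = d) (hlead : IsUnit p.leadingCoeff)
    (N : Type*) [AddCommGroup N] [Module R N] :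
    Function.Injective ⇑(matrixMap R d β N) ∧
    LinearMap.range (matrixMap R d β N) =
      LinearMap.ker ((LinearMap.rTensor N (laurentToQuot R p hp0).toLinearMap).comp
        (laurentIdent R N)) ∧
    Function.Surjective ⇑((LinearMap.rTensor N (laurentToQuot R p hp0).toLinearMap).comp
        (laurentIdent R N)) ∧
    Function.Bijective ⇑(basisMap R p d N) := by
  set mulP := LinearMap.mulLeft R (Polynomial.toLaurent p) with hmulP
  set f := mulP ∘ₗ sigmaLin R with hf
  set g := (laurentToQuot R p hp0).toLinearMap with hg
  have hsq := square R N d β p hp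
  rw [← hmulP, ← hf] at hsq
  have hinjP := mulLeft_toLaurent_injective R p hlead
  obtain ⟨r, hr⟩ := exists_retraction R p hp0 d hdeg hlead
  rw [← hmulP] at hr
  have hrf : ((sigmaLin R) ∘ₗ r) ∘ₗ f = LinearMap.id := by
    refine LinearMap.ext fun x => ?_
    simp only [LinearMap.comp_apply, LinearMap.id_apply, hf]
    have h1 := DFunLike.congr_fun hr (sigmaLin R x)
    simp only [LinearMap.comp_apply, LinearMap.id_apply] at h1
    rw [h1]
    have h2 := DFunLike.congr_fun (sigmaLin_sigmaLin R) x
    simpa using h2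
  have hFinj : Function.Injective (LinearMap.rTensor N f) :=
    rTensor_injective_of_retraction R N ((sigmaLin R) ∘ₗ r) hrf
  have hexact : Function.Exact f g := by
    rw [LinearMap.exact_iff, hg, ker_laurentToQuot R p hp0, hf, LinearMap.range_comp,
      LinearMap.range_eq_top.mpr (sigmaLin_bijective R).surjective, Submodule.map_top, hmulP]
  have hgsurj : Function.Surjective g := laurentToQuot_surjective R p hp0
  have htens : Function.Exact (LinearMap.rTensor N f) (LinearMap.rTensor N g) :=
    rTensor_exact N hexact hgsurj
  have hecoe : ∀ x : (ℤ →₀ N), laurentEquiv R N x = laurentIdent R N x := fun _ => rfl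
  refine ⟨?_, ?_, ?_, ?_⟩
  · intro a b hab
    apply (laurentEquiv R N).injective
    apply hFinj
    have h1 := DFunLike.congr_fun hsq a
    have h2 := DFunLike.congr_fun hsq b
    simp only [LinearMap.comp_apply] at h1 h2
    rw [hecoe, hecoe, ← h1, ← h2, hab]
  · ext x
    simp only [LinearMap.mem_range, LinearMap.mem_ker, LinearMap.comp_apply]
    constructor
    · rintro ⟨y, rfl⟩
      have h1 := DFunLike.congr_fun hsq y
      simp only [LinearMap.comp_apply] at h1
      rw [h1]
      exact htens.apply_apply_eq_zero _
    · intro hx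
      have hmem : laurentIdent R N x ∈ LinearMap.range (LinearMap.rTensor N f) := by
        rw [← htens.linearMap_ker_eq, LinearMap.mem_ker]
        exact hx
      obtain ⟨y, hy⟩ := hmem
      obtain ⟨z, rfl⟩ := (laurentEquiv R N).surjective y
      refine ⟨z, ?_⟩
      apply (laurentEquiv R N).injective
      have h1 := DFunLike.congr_fun hsq z
      simp only [LinearMap.comp_apply] at h1
      rw [hecoe, hecoe, h1]
      rw [hecoe] at hy
      exact hy
  · have hGsurj : Function.Surjective (LinearMap.rTensor N g) :=
      LinearMap.rTensor_surjective N hgsurj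
    rw [LinearMap.coe_comp]
    exact hGsurj.comp (laurentEquiv R N).surjective
  · exact basisMap_bijective R p d hdeg hlead N
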